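/- Let φ : I → ℝ be concave, continuously differentiable with φ'(t) > 0 for all t in an open interval I ⊆ ℝ, and let g : X → ℝ be convex and differentiable with g(X) ⊆ I on an open convex set X ⊆ ℝⁿ. Then f(x) = φ(g(x)) is invex with kernel η(x,y) = (φ'(g(y))/φ'(g(x)))·(y - x); that is, f(y) - f(x) ≥ ⟨∇f(x), η(x,y)⟩ for all x, y ∈ X. -/

import Mathlib

open RealInnerProductSpace

/-- One-dimensional convex gradient inequality. -/
lemma aux_convex_deriv_le {S : Set ℝ} {f : ℝ → ℝ} {x y f' : ℝ}
    (hfc : ConvexOn ℝ S f) (hx : x ∈ S) (hy : y ∈ S) (hf' : HasDerivAt f f' x) :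
    f' * (y - x) ≤ f y - f x := by
  rcases lt_trichotomy x y with h | h | h
  · have := hfc.le_slope_of_hasDerivAt hx hy h hf'
    rw [slope_def_field] at this
    have h' : 0 < y - x := by linarith
    calc f' * (y - x) ≤ (f y - f x) / (y - x) * (y - x) := by
          exact mul_le_mul_of_nonneg_right this h'.le
      _ = f y - f x := by field_simp
  · simp [h]
  · have := hfc.slope_le_of_hasDerivAt hy hx h hf'
    rw [slope_def_field] at this
    have h' : 0 < x - y := by linarith
    have : (f x - f y) ≤ f' * (x - y) := by
      calc f x - f y = (f x - f y) / (x - y) * (x - y) := by field_simp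
        _ ≤ f' * (x - y) := mul_le_mul_of_nonneg_right this h'.le
    linarith

/-- Concave one-dimensional inequality: tangent at `v` lies above. -/
lemma aux_concave_le {S : Set ℝ} {f : ℝ → ℝ} {u v f' : ℝ}
    (hfc : ConcaveOn ℝ S f) (hu : u ∈ S) (hv : v ∈ S) (hf' : HasDerivAt f f' u) :
    f' * (u - v) ≤ f u - f v := by
  have h := aux_convex_deriv_le (f := -f) hfc.neg hu hv hf'.neg
  simp only [Pi.neg_apply] at h
  have h2 : f' * (u - v) = -f' * (v - u) := by ring
  linarith

/-- Concave increasing transformation of a convex function is invex with kernel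
`η(x,y) = (φ'(g(y))/φ'(g(x)))·(y-x)`. -/
theorem invex_concave_convex_composite {n : ℕ} (a b : ℝ)
    (X : Set (EuclideanSpace ℝ (Fin n))) (hX : IsOpen X) (hXc : Convex ℝ X) (hXne : X.Nonempty)
    (φ : ℝ → ℝ)
    (hφconc : ConcaveOn ℝ (Set.Ioo a b) φ)
    (hφdiff : ∀ t ∈ Set.Ioo a b, DifferentiableAt ℝ φ t)
    (hφcont : ContinuousOn (deriv φ) (Set.Ioo a b))
    (hφpos : ∀ t ∈ Set.Ioo a b, 0 < deriv φ t)
    (g : EuclideanSpace ℝ (Fin n) → ℝ)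
    (hgconv : ConvexOn ℝ X g) (hgdiff : ∀ x ∈ X, DifferentiableAt ℝ g x)
    (hrange : ∀ x ∈ X, g x ∈ Set.Ioo a b) :
    ∀ x ∈ X, ∀ y ∈ X,
      φ (g y) - φ (g x) ≥
        ⟪gradient (fun z => φ (g z)) x, (deriv φ (g y) / deriv φ (g x)) • (y - x)⟫ := by
  intro x hx y hy
  -- derivative facts
  have hgx : HasFDerivAt g (fderiv ℝ g x) x := (hgdiff x hx).hasFDerivAt
  have hφx : HasDerivAt φ (deriv φ (g x)) (g x) := (hφdiff (g x) (hrange x hx)).hasDerivAt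
  have hcomp : HasFDerivAt (fun z => φ (g z)) (deriv φ (g x) • fderiv ℝ g x) x :=
    hφx.comp_hasFDerivAt x hgx
  -- gradient inner product formula
  have hgrad : ∀ v : EuclideanSpace ℝ (Fin n),
      ⟪gradient (fun z => φ (g z)) x, v⟫ = (deriv φ (g x) • fderiv ℝ g x) v := by
    intro v
    rw [gradient, hcomp.fderiv]
    exact InnerProductSpace.toDual_symm_apply
  rw [hgrad]
  -- step 1: convexity of g along segment
  have hline : HasDerivAt (fun t : ℝ => g (x + t • (y - x)))
      (fderiv ℝ g x (y - x)) 0 := by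
    have hc : HasDerivAt (fun t : ℝ => x + t • (y - x)) (y - x) 0 := by
      simpa using ((hasDerivAt_id (0:ℝ)).smul_const (y - x)).const_add x
    have hgx' : HasFDerivAt g (fderiv ℝ g x) (x + (0:ℝ) • (y - x)) := by
      simpa using hgx
    have := hgx'.comp_hasDerivAt (0:ℝ) hc
    exact this
  have heq : (fun t : ℝ => g (x + t • (y - x)))
      = g ∘ (AffineMap.lineMap x y : ℝ →ᵃ[ℝ] EuclideanSpace ℝ (Fin n)) := by
    funext t
    simp [Function.comp, AffineMap.lineMap_apply_module']
    congr 1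
    abel
  have hseg : ConvexOn ℝ (Set.Icc (0:ℝ) 1) (fun t : ℝ => g (x + t • (y - x))) := by
    rw [heq]
    refine (hgconv.comp_affineMap _).subset ?_ (convex_Icc 0 1)
    intro t ht
    simp only [Set.mem_preimage, AffineMap.lineMap_apply_module]
    exact hXc hx hy (by linarith [ht.2]) ht.1 (by ring)
  have hkey : fderiv ℝ g x (y - x) ≤ g y - g x := by
    have := aux_convex_deriv_le hseg (by norm_num : (0:ℝ) ∈ Set.Icc (0:ℝ) 1)
      (by norm_num : (1:ℝ) ∈ Set.Icc (0:ℝ) 1) hline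
    simpa using this
  -- step 2: concavity of φ
  have hφy : HasDerivAt φ (deriv φ (g y)) (g y) := (hφdiff (g y) (hrange y hy)).hasDerivAt
  have hconc : deriv φ (g y) * (g y - g x) ≤ φ (g y) - φ (g x) :=
    aux_concave_le hφconc (hrange y hy) (hrange x hx) hφy
  -- combine
  have hpx : 0 < deriv φ (g x) := hφpos _ (hrange x hx)
  have hpy : 0 < deriv φ (g y) := hφpos _ (hrange y hy)
  have hval : (deriv φ (g x) • fderiv ℝ g x) ((deriv φ (g y) / deriv φ (g x)) • (y - x))
      = deriv φ (g y) * fderiv ℝ g x (y - x) := by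
    simp [map_smul, smul_eq_mul]
    field_simp
  rw [hval]
  calc deriv φ (g y) * fderiv ℝ g x (y - x)
      ≤ deriv φ (g y) * (g y - g x) := by
        exact mul_le_mul_of_nonneg_left hkey hpy.le
    _ ≤ φ (g y) - φ (g x) := hconc
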